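/- arXiv:1010.2481 — 2 statements merged into one kernel-verified Lean document; each statement's English description precedes it below -/
import Mathlib

section
/- The Poisson bracket of the generating-function-induced extension with the constraint: for any smooth f(Q,Π) depending on phase space only through Q_I = e^{φ̂_I} q_I and Π_I = e^{−φ̂_I} π_I, one has {f, C_J} = 0 where C_J = π_φ^J − (π_J·q_J − ⟨π·q⟩). -/
/-- Extended phase space: (q, p, φ, π_φ). -/
abbrev ExtPhase (n d : ℕ) :=
  ((Fin n → Fin d → ℝ) × (Fin n → Fin d → ℝ)) × ((Fin n → ℝ) × (Fin n → ℝ))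

/-- Canonical Poisson bracket on the extended phase space: the (q,p) part plus
the (φ,π_φ) part. -/
noncomputable def extPB {n d : ℕ} (F G : ExtPhase n d → ℝ) (x : ExtPhase n d) : ℝ :=
  (∑ I : Fin n, ∑ a : Fin d,
    (fderiv ℝ F x ((Pi.single I (Pi.single a 1), 0), (0, 0)) *
       fderiv ℝ G x ((0, Pi.single I (Pi.single a 1)), (0, 0)) -
     fderiv ℝ F x ((0, Pi.single I (Pi.single a 1)), (0, 0)) *
       fderiv ℝ G x ((Pi.single I (Pi.single a 1), 0), (0, 0)))) +
  ∑ I : Fin n,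
    (fderiv ℝ F x ((0, 0), (Pi.single I 1, 0)) *
       fderiv ℝ G x ((0, 0), (0, Pi.single I 1)) -
     fderiv ℝ F x ((0, 0), (0, Pi.single I 1)) *
       fderiv ℝ G x ((0, 0), (Pi.single I 1, 0)))

open ContinuousLinearMap in
noncomputable def auxCq (n d : ℕ) (I : Fin n) (a : Fin d) : ExtPhase n d →L[ℝ] ℝ :=
  (proj a : (Fin d → ℝ) →L[ℝ] ℝ).comp ((proj I : (Fin n → Fin d → ℝ) →L[ℝ] (Fin d → ℝ)).comp
    ((fst ℝ (Fin n → Fin d → ℝ) (Fin n → Fin d → ℝ)).comp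
      (fst ℝ ((Fin n → Fin d → ℝ) × (Fin n → Fin d → ℝ)) ((Fin n → ℝ) × (Fin n → ℝ)))))

open ContinuousLinearMap in
noncomputable def auxCp (n d : ℕ) (I : Fin n) (a : Fin d) : ExtPhase n d →L[ℝ] ℝ :=
  (proj a : (Fin d → ℝ) →L[ℝ] ℝ).comp ((proj I : (Fin n → Fin d → ℝ) →L[ℝ] (Fin d → ℝ)).comp
    ((snd ℝ (Fin n → Fin d → ℝ) (Fin n → Fin d → ℝ)).comp
      (fst ℝ ((Fin n → Fin d → ℝ) × (Fin n → Fin d → ℝ)) ((Fin n → ℝ) × (Fin n → ℝ)))))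

open ContinuousLinearMap in
noncomputable def auxCφ (n d : ℕ) (I : Fin n) : ExtPhase n d →L[ℝ] ℝ :=
  (proj I : (Fin n → ℝ) →L[ℝ] ℝ).comp
    ((fst ℝ (Fin n → ℝ) (Fin n → ℝ)).comp
      (snd ℝ ((Fin n → Fin d → ℝ) × (Fin n → Fin d → ℝ)) ((Fin n → ℝ) × (Fin n → ℝ))))

open ContinuousLinearMap in
noncomputable def auxCπ (n d : ℕ) (I : Fin n) : ExtPhase n d →L[ℝ] ℝ :=
  (proj I : (Fin n → ℝ) →L[ℝ] ℝ).comp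
    ((snd ℝ (Fin n → ℝ) (Fin n → ℝ)).comp
      (snd ℝ ((Fin n → Fin d → ℝ) × (Fin n → Fin d → ℝ)) ((Fin n → ℝ) × (Fin n → ℝ))))

@[simp] lemma auxCq_apply (n d : ℕ) (I : Fin n) (a : Fin d) (v : ExtPhase n d) :
    auxCq n d I a v = v.1.1 I a := rfl
@[simp] lemma auxCp_apply (n d : ℕ) (I : Fin n) (a : Fin d) (v : ExtPhase n d) :
    auxCp n d I a v = v.1.2 I a := rfl
@[simp] lemma auxCφ_apply (n d : ℕ) (I : Fin n) (v : ExtPhase n d) :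
    auxCφ n d I v = v.2.1 I := rfl
@[simp] lemma auxCπ_apply (n d : ℕ) (I : Fin n) (v : ExtPhase n d) :
    auxCπ n d I v = v.2.2 I := rfl

noncomputable def auxCφh (n d : ℕ) (I : Fin n) : ExtPhase n d →L[ℝ] ℝ :=
  auxCφ n d I - (1 / (n : ℝ)) • ∑ K : Fin n, auxCφ n d K

@[simp] lemma auxCφh_apply (n d : ℕ) (I : Fin n) (v : ExtPhase n d) :
    auxCφh n d I v = v.2.1 I - 1 / (n : ℝ) * ∑ K : Fin n, v.2.1 K := by
  simp [auxCφh, ContinuousLinearMap.sum_apply]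

noncomputable def auxDQ (n d : ℕ) (x : ExtPhase n d) (I : Fin n) (a : Fin d) :
    ExtPhase n d →L[ℝ] ℝ :=
  Real.exp (x.2.1 I - 1 / (n : ℝ) * ∑ K : Fin n, x.2.1 K) • auxCq n d I a +
    x.1.1 I a • (Real.exp (x.2.1 I - 1 / (n : ℝ) * ∑ K : Fin n, x.2.1 K) • auxCφh n d I)

noncomputable def auxDP (n d : ℕ) (x : ExtPhase n d) (I : Fin n) (a : Fin d) :
    ExtPhase n d →L[ℝ] ℝ :=
  Real.exp (-(x.2.1 I - 1 / (n : ℝ) * ∑ K : Fin n, x.2.1 K)) • auxCp n d I a +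
    x.1.2 I a • (Real.exp (-(x.2.1 I - 1 / (n : ℝ) * ∑ K : Fin n, x.2.1 K)) • (-auxCφh n d I))

noncomputable def auxLT (n d : ℕ) (x : ExtPhase n d) :
    ExtPhase n d →L[ℝ] ((Fin n → Fin d → ℝ) × (Fin n → Fin d → ℝ)) :=
  (ContinuousLinearMap.pi fun I => ContinuousLinearMap.pi fun a => auxDQ n d x I a).prod
  (ContinuousLinearMap.pi fun I => ContinuousLinearMap.pi fun a => auxDP n d x I a)

lemma auxLT_apply (n d : ℕ) (x v : ExtPhase n d) :
    auxLT n d x v = (fun I a => auxDQ n d x I a v, fun I a => auxDP n d x I a v) := rfl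

noncomputable def auxLC (n d : ℕ) (J : Fin n) (x : ExtPhase n d) : ExtPhase n d →L[ℝ] ℝ :=
  auxCπ n d J -
    ((∑ a : Fin d, (x.1.2 J a • auxCq n d J a + x.1.1 J a • auxCp n d J a)) -
      (1 / (n : ℝ)) • ∑ K : Fin n, ∑ a : Fin d,
        (x.1.2 K a • auxCq n d K a + x.1.1 K a • auxCp n d K a))

/-- any smooth function f depending on phase space only through
Q_I = e^{φ̂_I} q_I and P_I = e^{−φ̂_I} p_I Poisson-commutes with the
constraints C_J = π_φ^J − (p_J·q_J − ⟨p·q⟩). -/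
theorem transformed_functions_commute_with_C (n d : ℕ) (hn : 1 ≤ n)
    (g : (Fin n → Fin d → ℝ) × (Fin n → Fin d → ℝ) → ℝ)
    (hg : Differentiable ℝ g)
    (φhat : (Fin n → ℝ) → Fin n → ℝ)
    (hφhat : φhat = fun φ I => φ I - (1 / (n : ℝ)) * ∑ J : Fin n, φ J)
    (f : ExtPhase n d → ℝ)
    (hf : f = fun x => g (fun I a => Real.exp (φhat x.2.1 I) * x.1.1 I a,
                          fun I a => Real.exp (-(φhat x.2.1 I)) * x.1.2 I a))
    (C : Fin n → ExtPhase n d → ℝ)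
    (hC : C = fun J x => x.2.2 J -
      ((∑ a : Fin d, x.1.2 J a * x.1.1 J a) -
        (1 / (n : ℝ)) * ∑ K : Fin n, ∑ a : Fin d, x.1.2 K a * x.1.1 K a)) :
    ∀ (J : Fin n) (x : ExtPhase n d), extPB f (C J) x = 0 := by
  intro J x
  simp only [hφhat] at hf
  -- derivative of the coordinate projections
  have hq : ∀ (K : Fin n) (b : Fin d),
      HasFDerivAt (fun y : ExtPhase n d => y.1.1 K b) (auxCq n d K b) x :=
    fun K b => (auxCq n d K b).hasFDerivAt
  have hp : ∀ (K : Fin n) (b : Fin d),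
      HasFDerivAt (fun y : ExtPhase n d => y.1.2 K b) (auxCp n d K b) x :=
    fun K b => (auxCp n d K b).hasFDerivAt
  have hφd : ∀ K : Fin n,
      HasFDerivAt (fun y : ExtPhase n d => y.2.1 K) (auxCφ n d K) x :=
    fun K => (auxCφ n d K).hasFDerivAt
  have hφh : ∀ I : Fin n,
      HasFDerivAt (fun y : ExtPhase n d => y.2.1 I - 1 / (n : ℝ) * ∑ K : Fin n, y.2.1 K)
        (auxCφh n d I) x := by
    intro I
    exact (hφd I).sub ((HasFDerivAt.fun_sum (fun K _ => hφd K)).const_mul (1 / (n : ℝ)))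
  -- derivative of the transformation map
  have hT : HasFDerivAt (fun y : ExtPhase n d =>
      ((fun I a => Real.exp (y.2.1 I - 1 / (n : ℝ) * ∑ K : Fin n, y.2.1 K) * y.1.1 I a,
        fun I a => Real.exp (-(y.2.1 I - 1 / (n : ℝ) * ∑ K : Fin n, y.2.1 K)) * y.1.2 I a) :
        (Fin n → Fin d → ℝ) × (Fin n → Fin d → ℝ))) (auxLT n d x) x := by
    refine HasFDerivAt.prodMk ?_ ?_
    · exact hasFDerivAt_pi.2 fun I => hasFDerivAt_pi.2 fun a =>
        ((hφh I).exp.mul (hq I a))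
    · exact hasFDerivAt_pi.2 fun I => hasFDerivAt_pi.2 fun a =>
        (((hφh I).neg.exp).mul (hp I a))
  set TX : (Fin n → Fin d → ℝ) × (Fin n → Fin d → ℝ) :=
    (fun I a => Real.exp (x.2.1 I - 1 / (n : ℝ) * ∑ K : Fin n, x.2.1 K) * x.1.1 I a,
     fun I a => Real.exp (-(x.2.1 I - 1 / (n : ℝ) * ∑ K : Fin n, x.2.1 K)) * x.1.2 I a)
    with hTX
  have hfd : HasFDerivAt f ((fderiv ℝ g TX).comp (auxLT n d x)) x := by
    rw [hf]
    exact ((hg TX).hasFDerivAt.comp x hT)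
  have hCd : HasFDerivAt (C J) (auxLC n d J x) x := by
    rw [hC]
    exact ((auxCπ n d J).hasFDerivAt).sub
      ((HasFDerivAt.fun_sum (fun a _ => (hp J a).mul (hq J a))).sub
        ((HasFDerivAt.fun_sum (fun K _ => HasFDerivAt.fun_sum (fun a _ => (hp K a).mul (hq K a)))).const_mul
          (1 / (n : ℝ))))
  set G0 := fderiv ℝ g TX with hG0
  set gQ : Fin n → Fin d → ℝ := fun I a => G0 ((Pi.single I (Pi.single a 1) : Fin n → Fin d → ℝ), 0) with hgQ
  set gP : Fin n → Fin d → ℝ := fun I a => G0 ((0 : Fin n → Fin d → ℝ), Pi.single I (Pi.single a 1)) with hgP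
  -- linearity expansion of G0
  have hGL : ∀ u w : Fin n → Fin d → ℝ,
      G0 (u, w) = ∑ I : Fin n, ∑ a : Fin d, (u I a * gQ I a + w I a * gP I a) := by
    intro u w
    have hu : (u, w) = ∑ I : Fin n, ∑ a : Fin d,
        (u I a • ((Pi.single I (Pi.single a 1) : Fin n → Fin d → ℝ),
            (0 : Fin n → Fin d → ℝ)) +
         w I a • ((0 : Fin n → Fin d → ℝ),
            (Pi.single I (Pi.single a 1) : Fin n → Fin d → ℝ))) := by
      apply Prod.ext <;>
        · simp only [Prod.fst_sum, Prod.snd_sum, Prod.fst_add, Prod.snd_add, Prod.smul_fst,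
            Prod.smul_snd, smul_zero, add_zero, zero_add]
          funext K b
          simp [Finset.sum_apply, Pi.single_apply, apply_ite (fun φ : Fin d → ℝ => φ b),
            Finset.sum_ite_eq, smul_eq_mul]
    rw [hu, map_sum]
    refine Finset.sum_congr rfl fun I _ => ?_
    rw [map_sum]
    refine Finset.sum_congr rfl fun a _ => ?_
    rw [map_add, map_smul, map_smul, smul_eq_mul, smul_eq_mul]
  have hfder : fderiv ℝ f x = G0.comp (auxLT n d x) := hfd.fderiv
  have hCder : fderiv ℝ (C J) x = auxLC n d J x := hCd.fderiv
  -- values of the derivative of f in the coordinate directions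
  have hA : ∀ (I : Fin n) (a : Fin d),
      (G0.comp (auxLT n d x)) ((Pi.single I (Pi.single a 1), 0), (0, 0)) =
        Real.exp (x.2.1 I - 1 / (n : ℝ) * ∑ K : Fin n, x.2.1 K) * gQ I a := by
    intro I a
    rw [ContinuousLinearMap.comp_apply, auxLT_apply, hGL]
    simp [auxDQ, auxDP, Pi.single_apply, ite_apply,
      mul_ite, ite_mul, Finset.sum_ite_eq]
  have hB : ∀ (I : Fin n) (a : Fin d),
      (G0.comp (auxLT n d x)) ((0, Pi.single I (Pi.single a 1)), (0, 0)) =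
        Real.exp (-(x.2.1 I - 1 / (n : ℝ) * ∑ K : Fin n, x.2.1 K)) * gP I a := by
    intro I a
    rw [ContinuousLinearMap.comp_apply, auxLT_apply, hGL]
    simp [auxDQ, auxDP, Pi.single_apply, ite_apply,
      mul_ite, ite_mul, Finset.sum_ite_eq]
  have hΦ : ∀ K : Fin n,
      (G0.comp (auxLT n d x)) ((0, 0), (Pi.single K 1, 0)) =
        ∑ L : Fin n, ∑ b : Fin d,
          (((if L = K then (1 : ℝ) else 0) - 1 / (n : ℝ)) *
            (Real.exp (x.2.1 L - 1 / (n : ℝ) * ∑ M : Fin n, x.2.1 M) * x.1.1 L b * gQ L b -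
             Real.exp (-(x.2.1 L - 1 / (n : ℝ) * ∑ M : Fin n, x.2.1 M)) * x.1.2 L b * gP L b)) := by
    intro K
    rw [ContinuousLinearMap.comp_apply, auxLT_apply, hGL]
    refine Finset.sum_congr rfl fun L _ => Finset.sum_congr rfl fun b _ => ?_
    simp [auxDQ, auxDP, Pi.single_apply]
    ring
  have hπf : ∀ K : Fin n,
      (G0.comp (auxLT n d x)) ((0, 0), (0, Pi.single K 1)) = 0 := by
    intro K
    rw [ContinuousLinearMap.comp_apply, auxLT_apply, hGL]
    simp [auxDQ, auxDP]
  -- values of the derivative of C J in the coordinate directions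
  have hCq : ∀ (I : Fin n) (a : Fin d),
      auxLC n d J x ((Pi.single I (Pi.single a 1), 0), (0, 0)) =
        -(((if I = J then (1 : ℝ) else 0) - 1 / (n : ℝ)) * x.1.2 I a) := by
    intro I a
    rcases eq_or_ne I J with h | h
    · subst h
      simp [auxLC, ContinuousLinearMap.sum_apply, Pi.single_apply,
        ite_apply, mul_ite, ite_mul, Finset.sum_ite_eq]
      try ring
    · simp [auxLC, ContinuousLinearMap.sum_apply, Pi.single_apply, h, Ne.symm h,
        ite_apply, mul_ite, ite_mul, Finset.sum_ite_eq]
      try ring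
  have hCp : ∀ (I : Fin n) (a : Fin d),
      auxLC n d J x ((0, Pi.single I (Pi.single a 1)), (0, 0)) =
        -(((if I = J then (1 : ℝ) else 0) - 1 / (n : ℝ)) * x.1.1 I a) := by
    intro I a
    rcases eq_or_ne I J with h | h
    · subst h
      simp [auxLC, ContinuousLinearMap.sum_apply, Pi.single_apply,
        ite_apply, mul_ite, ite_mul, Finset.sum_ite_eq]
      try ring
    · simp [auxLC, ContinuousLinearMap.sum_apply, Pi.single_apply, h, Ne.symm h,
        ite_apply, mul_ite, ite_mul, Finset.sum_ite_eq]
      try ring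
  have hCφ : ∀ K : Fin n, auxLC n d J x ((0, 0), (Pi.single K 1, 0)) = 0 := by
    intro K
    simp [auxLC, ContinuousLinearMap.sum_apply]
  have hCπ : ∀ K : Fin n,
      auxLC n d J x ((0, 0), (0, Pi.single K 1)) = if J = K then (1 : ℝ) else 0 := by
    intro K
    simp [auxLC, ContinuousLinearMap.sum_apply, Pi.single_apply]
  -- assemble
  unfold extPB
  rw [hfder, hCder]
  simp only [hA, hB, hΦ, hπf, hCq, hCp, hCφ, hCπ, mul_zero, zero_mul, sub_zero,
    mul_ite, mul_one, Finset.sum_ite_eq, Finset.mem_univ, if_true]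
  rw [← Finset.sum_add_distrib]
  refine Finset.sum_eq_zero fun I _ => ?_
  rw [← Finset.sum_add_distrib]
  refine Finset.sum_eq_zero fun a _ => ?_
  rcases eq_or_ne I J with h | h <;> simp [h] <;> ring
end

section
/- The Poisson bracket {Tχ(f), π_φ(α)} for the transformed single-particle constraints evaluates to ∑_J [⟨α_J f_J(π_J² + |k|q_J²)⟩ − α_J f_J(π_J² + |k|q_J²)] at φ = 0; in particular at φ = 0 it vanishes for all choices α of mean-zero coefficient vectors iff f_J(‖π_J‖² + |k|‖q_J‖²) is independent of J. -/
noncomputable def eφ (n d : ℕ) (K : Fin n) : ExtPhase n d →L[ℝ] ℝ :=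
  (ContinuousLinearMap.proj K).comp ((ContinuousLinearMap.fst ℝ _ _).comp (ContinuousLinearMap.snd ℝ _ _))

noncomputable def ep (n d : ℕ) (I : Fin n) (a : Fin d) : ExtPhase n d →L[ℝ] ℝ :=
  ((ContinuousLinearMap.proj a : (Fin d → ℝ) →L[ℝ] ℝ).comp
    ((ContinuousLinearMap.proj I : (Fin n → Fin d → ℝ) →L[ℝ] (Fin d → ℝ)).comp
      ((ContinuousLinearMap.snd ℝ (Fin n → Fin d → ℝ) (Fin n → Fin d → ℝ)).comp
        (ContinuousLinearMap.fst ℝ ((Fin n → Fin d → ℝ) × (Fin n → Fin d → ℝ)) ((Fin n → ℝ) × (Fin n → ℝ))))))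

noncomputable def eq' (n d : ℕ) (I : Fin n) (a : Fin d) : ExtPhase n d →L[ℝ] ℝ :=
  ((ContinuousLinearMap.proj a : (Fin d → ℝ) →L[ℝ] ℝ).comp
    ((ContinuousLinearMap.proj I : (Fin n → Fin d → ℝ) →L[ℝ] (Fin d → ℝ)).comp
      ((ContinuousLinearMap.fst ℝ (Fin n → Fin d → ℝ) (Fin n → Fin d → ℝ)).comp
        (ContinuousLinearMap.fst ℝ ((Fin n → Fin d → ℝ) × (Fin n → Fin d → ℝ)) ((Fin n → ℝ) × (Fin n → ℝ))))))

lemma eφ_apply (n d : ℕ) (K : Fin n) (y : ExtPhase n d) : eφ n d K y = y.2.1 K := rfl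
lemma ep_apply (n d : ℕ) (I : Fin n) (a : Fin d) (y : ExtPhase n d) : ep n d I a y = y.1.2 I a := rfl
lemma eq'_apply (n d : ℕ) (I : Fin n) (a : Fin d) (y : ExtPhase n d) : eq' n d I a y = y.1.1 I a := rfl

lemma key {n d : ℕ} (k : ℝ) (x : ExtPhase n d) (hx : x.2.1 = 0) (I J : Fin n) :
    fderiv ℝ (fun y : ExtPhase n d =>
      (1 / 2 : ℝ) * (Real.exp (-2 * (y.2.1 I - (1 / (n:ℝ)) * ∑ K : Fin n, y.2.1 K)) * (∑ a : Fin d, y.1.2 I a ^ 2)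
        - Real.exp (2 * (y.2.1 I - (1 / (n:ℝ)) * ∑ K : Fin n, y.2.1 K)) * (|k| * ∑ a : Fin d, y.1.1 I a ^ 2)))
      x ((0, 0), (Pi.single J 1, 0))
    = -(((∑ a : Fin d, x.1.2 I a ^ 2) + |k| * ∑ a : Fin d, x.1.1 I a ^ 2)) *
        ((if I = J then (1:ℝ) else 0) - 1 / (n : ℝ)) := by
  set Lφ : ExtPhase n d →L[ℝ] ℝ := eφ n d I - (1 / (n:ℝ)) • (∑ K : Fin n, eφ n d K) with hLφ
  have h1 : HasFDerivAt (fun y : ExtPhase n d => y.2.1 I - (1 / (n:ℝ)) * ∑ K : Fin n, y.2.1 K) Lφ x :=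
    (eφ n d I).hasFDerivAt.sub
      ((HasFDerivAt.fun_sum (fun K _ => (eφ n d K).hasFDerivAt)).const_mul (1 / (n:ℝ)))
  have h2 : HasFDerivAt (fun y : ExtPhase n d =>
      Real.exp (-2 * (y.2.1 I - (1 / (n:ℝ)) * ∑ K : Fin n, y.2.1 K)))
      (Real.exp (-2 * (x.2.1 I - (1 / (n:ℝ)) * ∑ K : Fin n, x.2.1 K)) • ((-2 : ℝ) • Lφ)) x :=
    (Real.hasDerivAt_exp _).comp_hasFDerivAt x (h1.const_mul (-2))
  have h2' : HasFDerivAt (fun y : ExtPhase n d =>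
      Real.exp (2 * (y.2.1 I - (1 / (n:ℝ)) * ∑ K : Fin n, y.2.1 K)))
      (Real.exp (2 * (x.2.1 I - (1 / (n:ℝ)) * ∑ K : Fin n, x.2.1 K)) • ((2 : ℝ) • Lφ)) x :=
    (Real.hasDerivAt_exp _).comp_hasFDerivAt x (h1.const_mul 2)
  have hsq : ∀ a : Fin d, HasFDerivAt (fun y : ExtPhase n d => y.1.2 I a ^ 2)
      ((2 * x.1.2 I a) • ep n d I a) x := by
    intro a
    have := (ep n d I a).hasFDerivAt (x := x) |>.fun_mul ((ep n d I a).hasFDerivAt (x := x))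
    simpa [pow_two, two_mul, add_smul, ep_apply] using this
  have hsq' : ∀ a : Fin d, HasFDerivAt (fun y : ExtPhase n d => y.1.1 I a ^ 2)
      ((2 * x.1.1 I a) • eq' n d I a) x := by
    intro a
    have := (eq' n d I a).hasFDerivAt (x := x) |>.fun_mul ((eq' n d I a).hasFDerivAt (x := x))
    simpa [pow_two, two_mul, add_smul, eq'_apply] using this
  have h3 : HasFDerivAt (fun y : ExtPhase n d => ∑ a : Fin d, y.1.2 I a ^ 2)
      (∑ a : Fin d, (2 * x.1.2 I a) • ep n d I a) x :=
    HasFDerivAt.fun_sum (fun a _ => hsq a)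
  have h3' : HasFDerivAt (fun y : ExtPhase n d => ∑ a : Fin d, y.1.1 I a ^ 2)
      (∑ a : Fin d, (2 * x.1.1 I a) • eq' n d I a) x :=
    HasFDerivAt.fun_sum (fun a _ => hsq' a)
  have H := ((h2.fun_mul h3).fun_sub (h2'.fun_mul (h3'.const_mul |k|))).const_mul (1/2 : ℝ)
  rw [H.fderiv]
  have hsum : (∑ K : Fin n, Pi.single J (1:ℝ) K) = 1 := by
    simp [Finset.sum_pi_single']
  simp only [hx, ContinuousLinearMap.add_apply, ContinuousLinearMap.coe_smul', Pi.smul_apply,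
    ContinuousLinearMap.coe_sub', Pi.sub_apply, ContinuousLinearMap.sum_apply,
    eφ_apply, ep_apply, eq'_apply, smul_eq_mul, Pi.zero_apply, hLφ]
  simp only [Pi.single_apply, hsum, mul_zero, Finset.sum_const_zero, zero_sub, sub_zero,
    neg_zero, mul_neg, Real.exp_zero,
    Finset.sum_ite_eq', Finset.mem_univ, if_true]
  ring

noncomputable def eπ (n d : ℕ) (J : Fin n) : ExtPhase n d →L[ℝ] ℝ :=
  (ContinuousLinearMap.proj J).comp ((ContinuousLinearMap.snd ℝ _ _).comp (ContinuousLinearMap.snd ℝ _ _))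

lemma fderiv_G {n d : ℕ} (J : Fin n) (x v : ExtPhase n d) :
    fderiv ℝ (fun y : ExtPhase n d => y.2.2 J) x v = v.2.2 J := by
  rw [show (fun y : ExtPhase n d => y.2.2 J) = ⇑(eπ n d J) from rfl,
    ContinuousLinearMap.fderiv]
  rfl

/-- at φ = 0, the smeared bracket B(f,α) = ∑_{I,J} f_I α_J {Tχ_I, π_φ^J}
equals ∑_J α_J (⟨f·A⟩ − f_J A_J) with A_J = ‖p_J‖² + |k|‖q_J‖², and it vanishes
for all α iff f_J A_J is independent of J. -/
theorem smeared_bracket_formula (n d : ℕ) (hn : 1 ≤ n) (hd : 1 ≤ d)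
    (k : ℝ) (hk : k ≠ 0)
    (φhat : (Fin n → ℝ) → Fin n → ℝ)
    (hφhat : φhat = fun φ I => φ I - (1 / (n : ℝ)) * ∑ J : Fin n, φ J)
    (Tχ : Fin n → ExtPhase n d → ℝ)
    (hTχ : Tχ = fun I x => (1 / 2 : ℝ) *
      (Real.exp (-2 * φhat x.2.1 I) * (∑ a : Fin d, x.1.2 I a ^ 2)
        - Real.exp (2 * φhat x.2.1 I) * (|k| * ∑ a : Fin d, x.1.1 I a ^ 2)))
    (x : ExtPhase n d) (hx : x.2.1 = 0)
    (A : Fin n → ℝ)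
    (hA : A = fun J => (∑ a : Fin d, x.1.2 J a ^ 2) + |k| * ∑ a : Fin d, x.1.1 J a ^ 2)
    (B : (Fin n → ℝ) → (Fin n → ℝ) → ℝ)
    (hB : B = fun f α => ∑ I : Fin n, ∑ J : Fin n,
      f I * α J * extPB (Tχ I) (fun y => y.2.2 J) x) :
    (∀ f α : Fin n → ℝ,
      B f α = ∑ J : Fin n, α J * ((1 / (n : ℝ)) * (∑ K : Fin n, f K * A K) - f J * A J)) ∧
    (∀ f : Fin n → ℝ,
      (∀ α : Fin n → ℝ, B f α = 0) ↔ ∃ c : ℝ, ∀ J : Fin n, f J * A J = c) := by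
  have hPB : ∀ I J : Fin n, extPB (Tχ I) (fun y => y.2.2 J) x
      = -(A I) * ((if I = J then (1:ℝ) else 0) - 1 / (n : ℝ)) := by
    intro I J
    have h0 : Tχ I = (fun y : ExtPhase n d => (1 / 2 : ℝ) *
        (Real.exp (-2 * (y.2.1 I - (1 / (n:ℝ)) * ∑ K : Fin n, y.2.1 K)) * (∑ a : Fin d, y.1.2 I a ^ 2)
          - Real.exp (2 * (y.2.1 I - (1 / (n:ℝ)) * ∑ K : Fin n, y.2.1 K)) * (|k| * ∑ a : Fin d, y.1.1 I a ^ 2))) := by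
      rw [hTχ, hφhat]
    rw [h0, hA]
    unfold extPB
    simp only [fderiv_G, key k x hx I]
    simp [Pi.single_apply, mul_ite, mul_one, mul_zero, Finset.sum_ite_eq]
  have part1 : ∀ f α : Fin n → ℝ,
      B f α = ∑ J : Fin n, α J * ((1 / (n : ℝ)) * (∑ K : Fin n, f K * A K) - f J * A J) := by
    intro f α
    simp only [hB, hPB]
    rw [Finset.sum_comm]
    refine Finset.sum_congr rfl (fun J _ => ?_)
    have hstep : ∀ I : Fin n, f I * α J * (-(A I) * ((if I = J then (1:ℝ) else 0) - 1 / (n:ℝ)))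
        = (α J * (1 / (n:ℝ))) * (f I * A I) - α J * (if I = J then f I * A I else 0) := by
      intro I; split_ifs <;> ring
    simp only [hstep]
    rw [Finset.sum_sub_distrib, ← Finset.mul_sum, ← Finset.mul_sum,
      Finset.sum_ite_eq', if_pos (Finset.mem_univ J)]
    ring
  refine ⟨part1, fun f => ?_⟩
  have hn0 : (n : ℝ) ≠ 0 := Nat.cast_ne_zero.mpr (by omega)
  constructor
  · intro h
    refine ⟨(1 / (n : ℝ)) * ∑ K : Fin n, f K * A K, fun J => ?_⟩
    have hJ := h (Pi.single J 1)
    rw [part1 f (Pi.single J 1)] at hJ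
    simp only [Pi.single_apply, ite_mul, one_mul, zero_mul, Finset.sum_ite_eq, Finset.sum_ite_eq',
      Finset.mem_univ, if_true] at hJ
    linarith
  · rintro ⟨c, hc⟩ α
    rw [part1 f α]
    have hmean : (1 / (n : ℝ)) * ∑ K : Fin n, f K * A K = c := by
      simp only [hc, Finset.sum_const, Finset.card_univ, Fintype.card_fin, nsmul_eq_mul]
      field_simp
    refine Finset.sum_eq_zero (fun J _ => ?_)
    rw [hmean, hc J, sub_self, mul_zero]
end
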